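/- Optimal leader value in the Tantrum game: consider the n-fold repetition of the stage game where the follower chooses accede (payoffs (q₁, -q₂) with q₁ > 0 and q₂ > 1) or refuse, after which the leader chooses payoff (0,0) or (-1,-1); payoffs are summed across stages. If n - ⌊n/q₂⌋ ≥ q₂, then the optimal SEFCE leader payoff equals q₁ · n/q₂. -/

import Mathlib

/-- A finite two-player perfect-information game tree: leaves carry payoffs
`(r₁, r₂)`; internal nodes belong to the leader (`isLeader = true`) or the
follower, and have a nonempty (finite) family of children. -/
inductive GTree : Type
  | leaf (r₁ r₂ : ℝ) : GTree
  | node (isLeader : Bool) (n : ℕ) (children : Fin (n + 1) → GTree) : GTree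

/-- Follower's backward-induction value against the grim (follower-payoff-minimizing)
leader strategy. -/
noncomputable def GTree.grim : GTree → ℝ
  | .leaf _ r₂ => r₂
  | .node isLeader _ c =>
      if isLeader then
        Finset.univ.inf' Finset.univ_nonempty (fun i => (c i).grim)
      else
        Finset.univ.sup' Finset.univ_nonempty (fun i => (c i).grim)

/-- Follower's backward-induction value under the joint altruistic
(follower-payoff-maximizing) strategy profile. -/
noncomputable def GTree.alt : GTree → ℝ
  | .leaf _ r₂ => r₂
  | .node _ _ c => Finset.univ.sup' Finset.univ_nonempty (fun i => (c i).alt)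

def ConcaveE (g : ℝ → EReal) : Prop :=
  ∀ x y t : ℝ, 0 ≤ t → t ≤ 1 →
    (t : EReal) * g x + ((1 - t : ℝ) : EReal) * g y ≤ g (t * x + (1 - t) * y)

/-- Upper concave envelope of an extended-real-valued function. -/
noncomputable def concE (f : ℝ → EReal) : ℝ → EReal :=
  fun μ => ⨅ h : {h : ℝ → EReal // ConcaveE h ∧ ∀ x, f x ≤ h x}, (h : ℝ → EReal) μ

/-- Left truncation at an extended-real threshold. -/
noncomputable def truncE' (g : ℝ → EReal) (t : EReal) : ℝ → EReal :=
  fun μ => if t ≤ (μ : EReal) then g μ else ⊥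

/-- Minimum required incentive of the child `i` among the family `c`:
the maximum grim value over the *other* children (`⊥` if there are none). -/
noncomputable def tauOf {n : ℕ} (c : Fin (n + 1) → GTree) (i : Fin (n + 1)) : EReal :=
  ⨆ (j : Fin (n + 1)) (_ : j ≠ i), ((c j).grim : EReal)

/-- The Enforceable Payoff Frontier (EPF), defined by backward induction:
degenerate at leaves; upper concave envelope of the children's EPFs at leader
nodes; upper concave envelope of the left-truncated children's EPFs at follower
nodes. -/
noncomputable def GTree.epf : GTree → ℝ → EReal
  | .leaf r₁ r₂ => fun μ => if μ = r₂ then (r₁ : EReal) else ⊥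
  | .node isLeader _ c =>
      if isLeader then
        concE (fun μ => ⨆ i, (c i).epf μ)
      else
        concE (fun μ => ⨆ i, truncE' ((c i).epf) (tauOf c i) μ)

/-- Number of leaves of the subtree. -/
def GTree.numLeaves : GTree → ℕ
  | .leaf _ _ => 1
  | .node _ _ c => ∑ i, (c i).numLeaves

/-- The `n`-fold Tantrum game, with accumulated payoffs `(a, b)` so far: at each
stage the follower either accedes (payoffs `(q₁, -q₂)` added) or refuses, after
which the leader chooses either the `(0,0)` or the `(-1,-1)` outcome for the
stage; payoffs are summed across stages and paid at the leaves. -/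
noncomputable def tantrum (q₁ q₂ : ℝ) : ℕ → ℝ → ℝ → GTree
  | 0, a, b => .leaf a b
  | n + 1, a, b => .node false 1 (fun i =>
      if i = 0 then tantrum q₁ q₂ n (a + q₁) (b - q₂)
      else .node true 1 (fun j =>
        if j = 0 then tantrum q₁ q₂ n a b
        else tantrum q₁ q₂ n (a - 1) (b - 1)))


namespace TantrumAux

open Finset

/-! ### Basic lemmas about `concE` -/

lemma le_concE (f : ℝ → EReal) (μ : ℝ) : f μ ≤ concE f μ :=
  le_iInf fun h => h.2.2 μ

lemma concE_le {f h : ℝ → EReal} (hh : ConcaveE h) (hfh : ∀ x, f x ≤ h x) (μ : ℝ) :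
    concE f μ ≤ h μ :=
  iInf_le (fun (g : {h : ℝ → EReal // ConcaveE h ∧ ∀ x, f x ≤ h x}) => (g : ℝ → EReal) μ)
    ⟨h, hh, hfh⟩

lemma concE_chord {f : ℝ → EReal} {x y u v : ℝ} (hx : (u : EReal) ≤ f x)
    (hy : (v : EReal) ≤ f y) {t : ℝ} (ht0 : 0 ≤ t) (ht1 : t ≤ 1) :
    ((t * u + (1 - t) * v : ℝ) : EReal) ≤ concE f (t * x + (1 - t) * y) := by
  refine le_iInf fun g => ?_
  obtain ⟨h, hh, hfh⟩ := g
  have h1 : ((t * u + (1 - t) * v : ℝ) : EReal)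
      = (t : EReal) * (u : EReal) + ((1 - t : ℝ) : EReal) * (v : EReal) := by
    push_cast; rfl
  calc ((t * u + (1 - t) * v : ℝ) : EReal)
      = (t : EReal) * (u : EReal) + ((1 - t : ℝ) : EReal) * (v : EReal) := h1
    _ ≤ (t : EReal) * h x + ((1 - t : ℝ) : EReal) * h y := by
        refine add_le_add ?_ ?_
        · exact mul_le_mul_of_nonneg_left (hx.trans (hfh x)) (by exact_mod_cast ht0)
        · exact mul_le_mul_of_nonneg_left (hy.trans (hfh y))
            (by exact_mod_cast (by linarith : (0:ℝ) ≤ 1 - t))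
    _ ≤ h (t * x + (1 - t) * y) := hh x y t ht0 ht1

/-! ### Two concave families: affine functions and step functions -/

lemma concaveE_affine (p s b : ℝ) :
    ConcaveE (fun μ => ((p + s * (b - μ) : ℝ) : EReal)) := by
  intro x y t ht0 ht1
  have : ((t : ℝ) : EReal) * ((p + s * (b - x) : ℝ) : EReal)
      + (((1 - t : ℝ)) : EReal) * ((p + s * (b - y) : ℝ) : EReal)
      = ((t * (p + s * (b - x)) + (1 - t) * (p + s * (b - y)) : ℝ) : EReal) := by
    push_cast; rfl
  rw [this]
  exact EReal.coe_le_coe_iff.2 (le_of_eq (by ring))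

/-- The concave step function: `⊤` on `[c, ∞)`, `⊥` below. -/
noncomputable def hbot (c : ℝ) : ℝ → EReal := fun μ => if c ≤ μ then ⊤ else ⊥

lemma hbot_of_lt {c μ : ℝ} (h : μ < c) : hbot c μ = ⊥ := if_neg (not_le.2 h)

lemma hbot_of_le {c μ : ℝ} (h : c ≤ μ) : hbot c μ = ⊤ := if_pos h

lemma hbot_mono {c c' : ℝ} (h : c ≤ c') (μ : ℝ) : hbot c' μ ≤ hbot c μ := by
  unfold hbot
  split
  · rw [if_pos (h.trans (by assumption))]
  · exact bot_le

lemma concaveE_hbot (c : ℝ) : ConcaveE (hbot c) := by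
  intro x y t ht0 ht1
  rcases eq_or_lt_of_le ht0 with h0 | h0
  · have : t = 0 := h0.symm
    subst this
    simp only [EReal.coe_zero, EReal.zero_mul, zero_add, sub_zero, EReal.coe_one, one_mul,
      zero_mul]
    exact le_of_eq rfl
  rcases eq_or_lt_of_le ht1 with h1 | h1
  · subst h1
    simp only [EReal.coe_one, one_mul, sub_self, EReal.coe_zero, EReal.zero_mul, add_zero,
      mul_one, zero_mul, add_zero]
    exact le_of_eq rfl
  by_cases hx : c ≤ x
  · by_cases hy : c ≤ y
    · have : c ≤ t * x + (1 - t) * y := by nlinarith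
      simp only [hbot, if_pos this]
      exact le_top
    · have : hbot c y = ⊥ := if_neg hy
      rw [this, EReal.coe_mul_bot_of_pos (by linarith), EReal.add_bot]
      exact bot_le
  · have : hbot c x = ⊥ := if_neg hx
    rw [this, EReal.coe_mul_bot_of_pos h0, EReal.bot_add]
    exact bot_le

/-! ### Fin 2 helpers -/

lemma sup'_fin2 (f : Fin (1 + 1) → ℝ) :
    Finset.univ.sup' Finset.univ_nonempty f = max (f 0) (f 1) := by
  refine le_antisymm (Finset.sup'_le _ _ fun i _ => ?_)
    (max_le (Finset.le_sup' f (Finset.mem_univ 0)) (Finset.le_sup' f (Finset.mem_univ 1)))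
  fin_cases i
  · exact le_max_left _ _
  · exact le_max_right _ _

lemma inf'_fin2 (f : Fin (1 + 1) → ℝ) :
    Finset.univ.inf' Finset.univ_nonempty f = min (f 0) (f 1) := by
  refine le_antisymm
    (le_min (Finset.inf'_le f (Finset.mem_univ 0)) (Finset.inf'_le f (Finset.mem_univ 1)))
    (Finset.le_inf' _ _ fun i _ => ?_)
  fin_cases i
  · exact min_le_left _ _
  · exact min_le_right _ _

lemma tauOf_le {n : ℕ} (c : Fin (n + 1) → GTree) (i : Fin (n + 1)) {x : EReal}
    (h : ∀ j, j ≠ i → ((c j).grim : EReal) ≤ x) : tauOf c i ≤ x :=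
  iSup₂_le h

lemma le_tauOf {n : ℕ} (c : Fin (n + 1) → GTree) {i j : Fin (n + 1)} (hj : j ≠ i) :
    ((c j).grim : EReal) ≤ tauOf c i :=
  le_iSup₂ (f := fun j (_ : j ≠ i) => ((c j).grim : EReal)) j hj

lemma truncE'_le (g : ℝ → EReal) (t : EReal) (μ : ℝ) : truncE' g t μ ≤ g μ := by
  unfold truncE'
  split
  · exact le_rfl
  · exact bot_le

lemma truncE'_of_le {g : ℝ → EReal} {t : EReal} {μ : ℝ} (h : t ≤ (μ : EReal)) :
    truncE' g t μ = g μ := if_pos h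

/-! ### Structure of the tantrum tree -/

/-- The leader ("refuse") node's children at one stage. -/
noncomputable def rfam (q₁ q₂ : ℝ) (k : ℕ) (a b : ℝ) : Fin (1 + 1) → GTree := fun j =>
  if j = 0 then tantrum q₁ q₂ k a b else tantrum q₁ q₂ k (a - 1) (b - 1)

/-- The follower node's children at one stage. -/
noncomputable def cfam (q₁ q₂ : ℝ) (k : ℕ) (a b : ℝ) : Fin (1 + 1) → GTree := fun i =>
  if i = 0 then tantrum q₁ q₂ k (a + q₁) (b - q₂)
  else .node true 1 (rfam q₁ q₂ k a b)

@[simp] lemma rfam_zero (q₁ q₂ : ℝ) (k : ℕ) (a b : ℝ) :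
    rfam q₁ q₂ k a b 0 = tantrum q₁ q₂ k a b := rfl

@[simp] lemma rfam_one (q₁ q₂ : ℝ) (k : ℕ) (a b : ℝ) :
    rfam q₁ q₂ k a b 1 = tantrum q₁ q₂ k (a - 1) (b - 1) := rfl

@[simp] lemma cfam_zero (q₁ q₂ : ℝ) (k : ℕ) (a b : ℝ) :
    cfam q₁ q₂ k a b 0 = tantrum q₁ q₂ k (a + q₁) (b - q₂) := rfl

@[simp] lemma cfam_one (q₁ q₂ : ℝ) (k : ℕ) (a b : ℝ) :
    cfam q₁ q₂ k a b 1 = .node true 1 (rfam q₁ q₂ k a b) := rfl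

lemma tantrum_zero (q₁ q₂ a b : ℝ) : tantrum q₁ q₂ 0 a b = .leaf a b := by
  simp [tantrum]

lemma tantrum_succ (q₁ q₂ : ℝ) (k : ℕ) (a b : ℝ) :
    tantrum q₁ q₂ (k + 1) a b = .node false 1 (cfam q₁ q₂ k a b) := rfl

lemma epf_leaf (r₁ r₂ : ℝ) (μ : ℝ) :
    (GTree.leaf r₁ r₂).epf μ = if μ = r₂ then (r₁ : EReal) else ⊥ := by
  simp [GTree.epf]

lemma epf_nodeF {n : ℕ} (c : Fin (n + 1) → GTree) :
    (GTree.node false n c).epf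
      = concE (fun μ => ⨆ i, truncE' ((c i).epf) (tauOf c i) μ) := by
  simp [GTree.epf]

lemma epf_nodeL {n : ℕ} (c : Fin (n + 1) → GTree) :
    (GTree.node true n c).epf = concE (fun μ => ⨆ i, (c i).epf μ) := by
  simp [GTree.epf]

lemma grim_nodeF {n : ℕ} (c : Fin (n + 1) → GTree) :
    (GTree.node false n c).grim
      = Finset.univ.sup' Finset.univ_nonempty (fun i => (c i).grim) := by
  simp [GTree.grim]

lemma grim_nodeL {n : ℕ} (c : Fin (n + 1) → GTree) :
    (GTree.node true n c).grim
      = Finset.univ.inf' Finset.univ_nonempty (fun i => (c i).grim) := by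
  simp [GTree.grim]

/-! ### The grim value of the tantrum game -/

lemma grim_tantrum {q₁ q₂ : ℝ} (hq₂ : 1 < q₂) : ∀ (k : ℕ) (a b : ℝ),
    (tantrum q₁ q₂ k a b).grim = b - k := by
  intro k
  induction k with
  | zero => intro a b; simp [tantrum, GTree.grim]
  | succ k ih =>
    intro a b
    rw [tantrum_succ, grim_nodeF, sup'_fin2, cfam_zero, cfam_one, grim_nodeL, inf'_fin2,
      rfam_zero, rfam_one, ih, ih, ih]
    push_cast
    rw [min_eq_right (by linarith), max_eq_right (by linarith)]
    ring

lemma grim_refuse {q₁ q₂ : ℝ} (hq₂ : 1 < q₂) (k : ℕ) (a b : ℝ) :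
    (GTree.node true 1 (rfam q₁ q₂ k a b)).grim = b - 1 - k := by
  rw [grim_nodeL, inf'_fin2, rfam_zero, rfam_one, grim_tantrum hq₂, grim_tantrum hq₂,
    min_eq_right (by linarith)]

/-- Threshold for the "accede" child. -/
lemma tauOf_cfam_zero {q₁ q₂ : ℝ} (hq₂ : 1 < q₂) (k : ℕ) (a b : ℝ) :
    tauOf (cfam q₁ q₂ k a b) 0 = ((b - 1 - k : ℝ) : EReal) := by
  refine le_antisymm (tauOf_le _ _ fun j hj => ?_) ?_
  · fin_cases j
    · exact absurd rfl hj
    · rw [Fin.mk_one, cfam_one, grim_refuse hq₂]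
  · have h1 := le_tauOf (cfam q₁ q₂ k a b) (i := 0) (j := 1) (by decide)
    rwa [cfam_one, grim_refuse hq₂] at h1

/-- Threshold for the "refuse" child. -/
lemma tauOf_cfam_one {q₁ q₂ : ℝ} (hq₂ : 1 < q₂) (k : ℕ) (a b : ℝ) :
    tauOf (cfam q₁ q₂ k a b) 1 = ((b - q₂ - k : ℝ) : EReal) := by
  refine le_antisymm (tauOf_le _ _ fun j hj => ?_) ?_
  · fin_cases j
    · rw [Fin.zero_eta, cfam_zero, grim_tantrum hq₂]
    · exact absurd rfl hj
  · have h1 := le_tauOf (cfam q₁ q₂ k a b) (i := 1) (j := 0) (by decide)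
    rw [cfam_zero, grim_tantrum hq₂] at h1
    exact h1

/-! ### Upper bounds on the EPF -/

lemma epf_le_affine {q₁ q₂ : ℝ} (hq₁ : 0 < q₁) (hq₂ : 1 < q₂) : ∀ (k : ℕ) (a b μ : ℝ),
    (tantrum q₁ q₂ k a b).epf μ ≤ ((a + q₁ / q₂ * (b - μ) : ℝ) : EReal) := by
  have hq₂0 : q₂ ≠ 0 := by linarith
  have hpos : 0 < q₁ / q₂ := by positivity
  intro k
  induction k with
  | zero =>
    intro a b μ
    rw [tantrum_zero, epf_leaf]
    split
    · rename_i h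
      subst h
      exact EReal.coe_le_coe_iff.2 (le_of_eq (by ring))
    · exact bot_le
  | succ k ih =>
    intro a b μ
    rw [tantrum_succ, epf_nodeF]
    refine concE_le (concaveE_affine a (q₁ / q₂) b) (fun x => ?_) μ
    refine iSup_le fun i => (truncE'_le _ _ _).trans ?_
    fin_cases i
    · rw [Fin.zero_eta, cfam_zero]
      refine (ih _ _ x).trans (EReal.coe_le_coe_iff.2 (le_of_eq ?_))
      field_simp
      ring
    · rw [Fin.mk_one, cfam_one, epf_nodeL]
      refine concE_le (concaveE_affine a (q₁ / q₂) b) (fun y => ?_) x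
      refine iSup_le fun j => ?_
      fin_cases j
      · rw [Fin.zero_eta, rfam_zero]
        exact ih a b y
      · rw [Fin.mk_one, rfam_one]
        refine (ih _ _ y).trans (EReal.coe_le_coe_iff.2 ?_)
        nlinarith

lemma epf_le_hbot {q₁ q₂ : ℝ} (hq₂ : 1 < q₂) : ∀ (k : ℕ) (a b μ : ℝ),
    (tantrum q₁ q₂ k a b).epf μ ≤ hbot (b - k) μ := by
  intro k
  induction k with
  | zero =>
    intro a b μ
    rw [tantrum_zero, epf_leaf]
    split
    · rename_i h
      subst h
      rw [hbot_of_le (by push_cast; linarith)]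
      exact le_top
    · exact bot_le
  | succ k ih =>
    intro a b μ
    rw [tantrum_succ, epf_nodeF]
    refine concE_le (concaveE_hbot _) (fun x => ?_) μ
    by_cases hx : b - ((k : ℕ) + 1 : ℝ) ≤ x
    · rw [hbot_of_le (by push_cast; linarith)]
      exact le_top
    push_neg at hx
    rw [hbot_of_lt (by push_cast; linarith)]
    refine iSup_le fun i => ?_
    fin_cases i
    · rw [Fin.zero_eta, truncE', tauOf_cfam_zero hq₂]
      rw [if_neg (by
        rw [EReal.coe_le_coe_iff]
        push_cast at hx
        intro hc
        linarith)]
    · rw [Fin.mk_one]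
      refine (truncE'_le _ _ _).trans ?_
      rw [cfam_one, epf_nodeL]
      have h2 : concE (fun μ => ⨆ j, ((rfam q₁ q₂ k a b) j).epf μ) x
          ≤ hbot (b - 1 - k) x := by
        refine concE_le (concaveE_hbot _) (fun y => ?_) x
        refine iSup_le fun j => ?_
        fin_cases j
        · rw [Fin.zero_eta, rfam_zero]
          exact (ih a b y).trans (hbot_mono (by linarith) y)
        · rw [Fin.mk_one, rfam_one]
          exact ih (a - 1) (b - 1) y
      rw [hbot_of_lt (by push_cast at hx ⊢; linarith)] at h2
      exact h2

/-! ### Lower bounds on the EPF -/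

/-- The function inside the `concE` at a follower node of the tantrum game. -/
noncomputable def Ffun (q₁ q₂ : ℝ) (k : ℕ) (a b : ℝ) : ℝ → EReal := fun μ =>
  ⨆ i, truncE' ((cfam q₁ q₂ k a b i).epf) (tauOf (cfam q₁ q₂ k a b) i) μ

lemma epf_succ (q₁ q₂ : ℝ) (k : ℕ) (a b : ℝ) :
    (tantrum q₁ q₂ (k + 1) a b).epf = concE (Ffun q₁ q₂ k a b) := by
  rw [tantrum_succ, epf_nodeF]
  rfl

lemma epf_ge_zero {q₁ q₂ : ℝ} (hq₂ : 1 < q₂) : ∀ (k : ℕ) (a b : ℝ),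
    (a : EReal) ≤ (tantrum q₁ q₂ k a b).epf b := by
  intro k
  induction k with
  | zero =>
    intro a b
    rw [tantrum_zero, epf_leaf, if_pos rfl]
  | succ k ih =>
    intro a b
    rw [epf_succ]
    refine le_trans ?_ (le_concE _ b)
    refine le_trans ?_ (le_iSup _ 1)
    rw [truncE'_of_le (by
      rw [tauOf_cfam_one hq₂, EReal.coe_le_coe_iff]
      have : (0:ℝ) ≤ (k:ℝ) := Nat.cast_nonneg k
      linarith)]
    rw [cfam_one, epf_nodeL]
    refine le_trans ?_ (le_concE _ b)
    refine le_trans ?_ (le_iSup _ 0)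
    rw [rfam_zero]
    exact ih a b

/-- Lower bound at `μ = b`, already inside the `concE`. -/
lemma Ffun_ge_at_b {q₁ q₂ : ℝ} (hq₂ : 1 < q₂) (k : ℕ) (a b : ℝ) :
    (a : EReal) ≤ Ffun q₁ q₂ k a b b := by
  refine le_trans ?_ (le_iSup _ 1)
  rw [truncE'_of_le (by
    rw [tauOf_cfam_one hq₂, EReal.coe_le_coe_iff]
    have : (0:ℝ) ≤ (k:ℝ) := Nat.cast_nonneg k
    linarith)]
  rw [cfam_one, epf_nodeL]
  refine le_trans ?_ (le_concE _ b)
  refine le_trans ?_ (le_iSup _ 0)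
  rw [rfam_zero]
  exact epf_ge_zero hq₂ k a b

/-- Main lower bound: an enforceable payment of `s` yields the leader `q₁ s / q₂`. -/
lemma epf_ge {q₁ q₂ : ℝ} (hq₁ : 0 < q₁) (hq₂ : 1 < q₂) : ∀ (k : ℕ) (a b s : ℝ),
    0 ≤ s → s ≤ (k : ℝ) → (s = 0 ∨ (k : ℝ) - (⌊s / q₂⌋ : ℝ) ≥ q₂) →
    ((a + q₁ * s / q₂ : ℝ) : EReal) ≤ (tantrum q₁ q₂ k a b).epf (b - s) := by
  have hq₂0 : q₂ ≠ 0 := by linarith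
  intro k
  induction k with
  | zero =>
    intro a b s hs0 hsk _
    have hs : s = 0 := le_antisymm (by exact_mod_cast hsk) hs0
    subst hs
    rw [tantrum_zero, epf_leaf, if_pos (by ring)]
    exact EReal.coe_le_coe_iff.2 (le_of_eq (by ring))
  | succ k ih =>
    intro a b s hs0 hsk hcond
    rcases eq_or_lt_of_le hs0 with hs | hs
    · -- s = 0
      rw [← hs, sub_zero]
      have e : (a + q₁ * 0 / q₂ : ℝ) = a := by ring
      rw [e]
      exact epf_ge_zero hq₂ (k + 1) a b
    have hc : (↑(k + 1) : ℝ) - (⌊s / q₂⌋ : ℝ) ≥ q₂ := by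
      rcases hcond with h | h
      · exact absurd h.symm (ne_of_lt hs)
      · exact h
    push_cast at hc hsk
    rw [epf_succ]
    by_cases hsq : q₂ ≤ s
    · -- accede fully in the first stage
      refine le_trans ?_ (le_concE _ _)
      refine le_trans ?_ (le_iSup _ 0)
      rw [truncE'_of_le (by
        rw [tauOf_cfam_zero hq₂, EReal.coe_le_coe_iff]
        linarith)]
      rw [cfam_zero]
      have hfl : ⌊(s - q₂) / q₂⌋ = ⌊s / q₂⌋ - 1 := by
        rw [sub_div, div_self hq₂0]
        exact_mod_cast Int.floor_sub_intCast (s / q₂) 1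
      have ihs := ih (a + q₁) (b - q₂) (s - q₂) (by linarith) (by linarith)
        (by
          rcases eq_or_lt_of_le (by linarith : (0:ℝ) ≤ s - q₂) with h0 | h0
          · exact Or.inl h0.symm
          · refine Or.inr ?_
            rw [hfl]
            push_cast
            linarith)
      have e1 : b - s = (b - q₂) - (s - q₂) := by ring
      have e2 : (a + q₁ * s / q₂ : ℝ) = (a + q₁) + q₁ * (s - q₂) / q₂ := by
        field_simp
        ring
      rw [e1, e2]
      exact ihs
    · -- 0 < s < q₂ : mix acceding with probability s/q₂
      push_neg at hsq
      have hfl : ⌊s / q₂⌋ = 0 :=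
        Int.floor_eq_zero_iff.2 ⟨div_nonneg hs0 (by linarith),
          (div_lt_one (by linarith)).2 hsq⟩
      rw [hfl] at hc
      norm_num at hc
      -- hc : q₂ ≤ k + 1
      set t := s / q₂ with ht
      have ht0 : 0 ≤ t := div_nonneg hs0 (by linarith)
      have ht1 : t ≤ 1 := le_of_lt ((div_lt_one (by linarith)).2 hsq)
      have hA : ((a + q₁ : ℝ) : EReal) ≤ Ffun q₁ q₂ k a b (b - q₂) := by
        refine le_trans ?_ (le_iSup _ 0)
        rw [truncE'_of_le (by
          rw [tauOf_cfam_zero hq₂, EReal.coe_le_coe_iff]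
          linarith)]
        rw [cfam_zero]
        exact epf_ge_zero hq₂ k (a + q₁) (b - q₂)
      have hB : (a : EReal) ≤ Ffun q₁ q₂ k a b b := Ffun_ge_at_b hq₂ k a b
      have key := concE_chord (f := Ffun q₁ q₂ k a b) hA hB ht0 ht1
      have e1 : t * (b - q₂) + (1 - t) * b = b - s := by
        rw [ht]
        field_simp
        ring
      have e2 : (t * (a + q₁) + (1 - t) * a : ℝ) = a + q₁ * s / q₂ := by
        rw [ht]
        field_simp
        ring
      rw [e1, e2] at key
      exact key

end TantrumAux

/-- Optimal leader value in the Tantrum game: the optimal SEFCE leader payoff (the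
maximum of the EPF at the root) equals `q₁ · n / q₂`, provided
`n - ⌊n/q₂⌋ ≥ q₂`. -/
theorem tantrum_optimal_value (q₁ q₂ : ℝ) (hq₁ : 0 < q₁) (hq₂ : 1 < q₂) (n : ℕ)
    (hcond : (n : ℝ) - ⌊(n : ℝ) / q₂⌋ ≥ q₂) :
    (⨆ μ : ℝ, (tantrum q₁ q₂ n 0 0).epf μ) = ((q₁ * n / q₂ : ℝ) : EReal) := by
  open TantrumAux in
  refine le_antisymm (iSup_le fun μ => ?_) ?_
  · by_cases h : μ < 0 - (n : ℝ)
    · refine le_trans (epf_le_hbot hq₂ n 0 0 μ) ?_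
      rw [hbot_of_lt h]
      exact bot_le
    · push_neg at h
      refine (epf_le_affine hq₁ hq₂ n 0 0 μ).trans (EReal.coe_le_coe_iff.2 ?_)
      have h1 : -μ ≤ (n : ℝ) := by linarith
      have h2 : (0:ℝ) ≤ q₁ / q₂ := by positivity
      calc 0 + q₁ / q₂ * (0 - μ) = q₁ / q₂ * (-μ) := by ring
        _ ≤ q₁ / q₂ * n := mul_le_mul_of_nonneg_left h1 h2
        _ = q₁ * n / q₂ := by ring
  · have lower := epf_ge hq₁ hq₂ n 0 0 (n : ℝ) (Nat.cast_nonneg n) le_rfl (Or.inr hcond)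
    refine le_trans ?_ (le_iSup _ (0 - (n : ℝ)))
    refine le_trans (le_of_eq ?_) lower
    norm_num
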